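/- Let p_1, ..., p_n be pairwise distinct primes, and for each i let O_i be the ring of integers of a finite extension of ℚ_{p_i}. Let H be a closed subgroup of SL_2(O_1) × ... × SL_2(O_n) whose projection to each factor SL_2(O_i) is an open subgroup of SL_2(O_i). Then H is open in SL_2(O_1) × ... × SL_2(O_n). -/

import Mathlib

open Matrix IsLocalRing

/-- `SL₂` of a topological ring carries the subspace topology from the matrix ring. -/
noncomputable instance sltop (n R : Type*) [DecidableEq n] [Fintype n] [CommRing R]
    [TopologicalSpace R] : TopologicalSpace (SpecialLinearGroup n R) :=
  TopologicalSpace.induced (fun A => (A : Matrix n n R)) inferInstance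

set_option linter.unusedSectionVars false
namespace Stmt12Aux

variable {R : Type*} [CommRing R]

local notation "SL2" R => SpecialLinearGroup (Fin 2) R
local notation "M2" R => Matrix (Fin 2) (Fin 2) R

/-- Congruence condition: all entries of `g - 1` lie in `J`. -/
def Ec (J : Ideal R) (g : SpecialLinearGroup (Fin 2) R) : Prop :=
  ∀ a b, ((g : M2 R) - 1) a b ∈ J

lemma entries_mul_mem {J J' : Ideal R} {A B : M2 R} (hA : ∀ a b, A a b ∈ J)
    (hB : ∀ a b, B a b ∈ J') : ∀ a b, (A * B) a b ∈ J * J' := by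
  intro a b
  rw [Matrix.mul_apply]
  exact Submodule.sum_mem _ fun c _ => Ideal.mul_mem_mul (hA a c) (hB c b)

lemma entries_mul_right_mem {J : Ideal R} {A : M2 R} (hA : ∀ a b, A a b ∈ J) (B : M2 R) :
    ∀ a b, (A * B) a b ∈ J := by
  intro a b
  rw [Matrix.mul_apply]
  exact Submodule.sum_mem _ fun c _ => J.mul_mem_right _ (hA a c)

lemma entries_mul_left_mem {J : Ideal R} {B : M2 R} (hB : ∀ a b, B a b ∈ J) (A : M2 R) :
    ∀ a b, (A * B) a b ∈ J := by
  intro a b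
  rw [Matrix.mul_apply]
  exact Submodule.sum_mem _ fun c _ => J.mul_mem_left _ (hB c b)

lemma Ec.one (J : Ideal R) : Ec J (1 : SL2 R) := by
  intro a b
  simp [Matrix.SpecialLinearGroup.coe_one]

lemma Ec.mul {J : Ideal R} {g h : SL2 R} (hg : Ec J g) (hh : Ec J h) : Ec J (g * h) := by
  intro a b
  have key : ((↑(g * h) : M2 R) - 1) = ((g : M2 R) - 1) * (h : M2 R) + ((h : M2 R) - 1) := by
    rw [Matrix.SpecialLinearGroup.coe_mul]; noncomm_ring
  rw [key]
  exact J.add_mem (entries_mul_right_mem hg _ a b) (hh a b)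

lemma Ec.pow {J : Ideal R} {g : SL2 R} (hg : Ec J g) (e : ℕ) : Ec J (g ^ e) := by
  induction e with
  | zero => simpa using Ec.one J
  | succ e ih => rw [pow_succ]; exact ih.mul hg

lemma Ec.mono {J J' : Ideal R} (h : J ≤ J') {g : SL2 R} (hg : Ec J g) : Ec J' g :=
  fun a b => h (hg a b)

lemma Ec.inv {J : Ideal R} {g : SL2 R} (hg : Ec J g) : Ec J g⁻¹ := by
  intro a b
  have h1 : (↑(g⁻¹) : M2 R) * (g : M2 R) = 1 := by
    rw [← Matrix.SpecialLinearGroup.coe_mul, inv_mul_cancel,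
      Matrix.SpecialLinearGroup.coe_one]
  have key : ((↑(g⁻¹) : M2 R) - 1) = (↑(g⁻¹) : M2 R) * (1 - (g : M2 R)) := by
    rw [mul_sub, h1, mul_one]
  rw [key]
  have : ∀ a b, ((1 : M2 R) - (g : M2 R)) a b ∈ J := by
    intro a b
    have := J.neg_mem (hg a b)
    simpa using this
  exact entries_mul_left_mem this _ a b

/-- Entries of powers of a congruence element stay congruent; key step:
if `g ≡ 1 mod J^k` with `k ≥ 1` and `(p : R) ∈ J` then `g^p ≡ 1 mod J^(k+1)`. -/
lemma Ec.pow_prime {m : Ideal R} {p k : ℕ} (hpm : (p : R) ∈ m) (hk : 1 ≤ k)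
    {g : SL2 R} (hg : Ec (m ^ k) g) : Ec (m ^ (k + 1)) (g ^ p) := by
  intro a b
  set x : M2 R := (g : M2 R) - 1 with hx
  have hxE : ∀ a b, x a b ∈ m ^ k := hg
  have hgx : (g : M2 R) = x + 1 := by rw [hx]; noncomm_ring
  have hcomm : Commute x (1 : M2 R) := Commute.one_right x
  have hexp : (↑(g ^ p) : M2 R) - 1
      = ∑ i ∈ Finset.range p, x ^ (i + 1) * 1 ^ (p - (i + 1)) * (p.choose (i + 1) : M2 R) := by
    rw [Matrix.SpecialLinearGroup.coe_pow, hgx, hcomm.add_pow, Finset.sum_range_succ']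
    simp
  rw [hexp, Matrix.sum_apply]
  refine Submodule.sum_mem _ fun i _ => ?_
  have hsimp : x ^ (i + 1) * 1 ^ (p - (i + 1)) * (p.choose (i + 1) : M2 R)
      = (p.choose (i + 1)) • x ^ (i + 1) := by
    rw [one_pow, mul_one, (Nat.cast_commute (p.choose (i + 1)) (x ^ (i + 1))).eq.symm,
      ← nsmul_eq_mul]
  rw [hsimp, Matrix.smul_apply, nsmul_eq_mul]
  cases i with
  | zero =>
    have h1 : (x ^ (0 + 1)) a b ∈ m ^ k := by simpa using hxE a b
    have : ((p.choose 1 : R)) * (x ^ (0 + 1)) a b ∈ m * m ^ k := by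
      rw [Nat.choose_one_right]
      exact Ideal.mul_mem_mul hpm h1
    rwa [← pow_succ'] at this
  | succ i =>
    have h2 : ∀ a b, (x * x) a b ∈ m ^ (k + 1) := by
      intro a b
      have hmem := entries_mul_mem hxE hxE a b
      have hle : m ^ k * m ^ k ≤ m ^ (k + 1) := by
        rw [← pow_add]
        exact Ideal.pow_le_pow_right (by omega)
      exact hle hmem
    have heq : x ^ (i + 1 + 1) = (x * x) * x ^ i := by
      rw [show i + 1 + 1 = 2 + i by omega, pow_add, pow_two]
    exact Ideal.mul_mem_left _ _ (heq ▸ entries_mul_right_mem h2 (x ^ i) a b)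

lemma Ec.pow_prime_iter {m : Ideal R} {p : ℕ} (hpm : (p : R) ∈ m)
    {g : SL2 R} (hg : Ec m g) (t : ℕ) : Ec (m ^ (1 + t)) (g ^ p ^ t) := by
  induction t with
  | zero => simpa [pow_one] using hg
  | succ t ih =>
    have := Ec.pow_prime (m := m) hpm (by omega) ih
    rw [pow_succ, pow_mul]
    exact this

section Topology

variable {R : Type*} [CommRing R] [TopologicalSpace R] [IsTopologicalRing R]

lemma continuous_coe : Continuous (fun g : SL2 R => (g : M2 R)) :=
  continuous_induced_dom

lemma isInducing_coe : Topology.IsInducing (fun g : SL2 R => (g : M2 R)) := ⟨rfl⟩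

lemma coe_injective : Function.Injective (fun g : SL2 R => (g : M2 R)) :=
  fun _ _ h => Subtype.ext h

lemma isEmbedding_coe : Topology.IsEmbedding (fun g : SL2 R => (g : M2 R)) :=
  ⟨isInducing_coe, coe_injective⟩

instance : IsTopologicalGroup (SL2 R) where
  continuous_mul := by
    rw [(isInducing_coe (R := R)).continuous_iff]
    have : ((fun g : SL2 R => (g : M2 R)) ∘ fun p : (SL2 R) × (SL2 R) => p.1 * p.2)
        = fun p : (SL2 R) × (SL2 R) => ((p.1 : M2 R) * (p.2 : M2 R)) := by
      funext p
      exact Matrix.SpecialLinearGroup.coe_mul _ _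
    rw [this]
    exact (continuous_coe.comp continuous_fst).matrix_mul (continuous_coe.comp continuous_snd)
  continuous_inv := by
    rw [(isInducing_coe (R := R)).continuous_iff]
    have : ((fun g : SL2 R => (g : M2 R)) ∘ fun g : SL2 R => g⁻¹)
        = fun g : SL2 R => (g : M2 R).adjugate := by
      funext g
      exact Matrix.SpecialLinearGroup.coe_inv g
    rw [this]
    exact continuous_coe.matrix_adjugate

instance [T2Space R] : T2Space (SL2 R) := isEmbedding_coe.t2Space

instance [CompactSpace R] : CompactSpace (Matrix (Fin 2) (Fin 2) R) :=
  inferInstanceAs (CompactSpace (Fin 2 → Fin 2 → R))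

lemma isClosedEmbedding_coe [T2Space R] :
    Topology.IsClosedEmbedding (fun g : SL2 R => (g : M2 R)) := by
  refine ⟨isEmbedding_coe, ?_⟩
  have : Set.range (fun g : SL2 R => (g : M2 R)) = (fun A : M2 R => A.det) ⁻¹' {1} := by
    ext A
    constructor
    · rintro ⟨g, rfl⟩
      exact g.2
    · intro hA
      exact ⟨⟨A, hA⟩, rfl⟩
  rw [this]
  exact isClosed_singleton.preimage continuous_id.matrix_det

instance [T2Space R] [CompactSpace R] : CompactSpace (SL2 R) :=
  (isClosedEmbedding_coe (R := R)).compactSpace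

/-- The level-`m` congruence subgroup of `SL₂(R)`. -/
def congSubgroup (m : Ideal R) : Subgroup (SpecialLinearGroup (Fin 2) R) where
  carrier := {g | Ec m g}
  one_mem' := Ec.one m
  mul_mem' := fun ha hb => ha.mul hb
  inv_mem' := fun ha => ha.inv

lemma congSubgroup_isOpen (m : Ideal R) (hm : IsOpen (m : Set R)) :
    IsOpen ((congSubgroup m : Set (SL2 R))) := by
  have hset : (congSubgroup m : Set (SL2 R))
      = ⋂ a, ⋂ b, (fun g : SL2 R => ((g : M2 R) - 1) a b) ⁻¹' (m : Set R) := by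
    ext g
    simp only [Set.mem_iInter, Set.mem_preimage, SetLike.mem_coe]
    rfl
  rw [hset]
  exact isOpen_iInter_of_finite fun a => isOpen_iInter_of_finite fun b =>
    hm.preimage ((continuous_coe.sub continuous_const).matrix_elem a b)

lemma tendsto_of_entries {m : Ideal R} (hadic : IsAdic m) {g : ℕ → SL2 R} {c : SL2 R}
    (h : ∀ t a b, ((g t : M2 R) - (c : M2 R)) a b ∈ m ^ (1 + t)) :
    Filter.Tendsto g Filter.atTop (nhds c) := by
  rw [(isInducing_coe (R := R)).tendsto_nhds_iff]
  refine tendsto_pi_nhds.mpr fun a => tendsto_pi_nhds.mpr fun b => ?_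
  have h0 : Filter.Tendsto (fun t => (((g t : M2 R)) - (c : M2 R)) a b)
      Filter.atTop (nhds 0) := by
    rw [Filter.tendsto_def]
    intro U hU
    obtain ⟨s, hs⟩ := (isAdic_iff.mp hadic).2 U hU
    filter_upwards [Filter.eventually_ge_atTop s] with t ht
    exact hs (Ideal.pow_le_pow_right (by omega) (h t a b))
  have := h0.add (tendsto_const_nhds (x := (c : M2 R) a b))
  simp only [zero_add] at this
  convert this using 2 with t
  simp [Matrix.sub_apply]

end Topology

lemma exists_exp {n : ℕ} (p : Fin n → ℕ) (hp : ∀ i, (p i).Prime)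
    (hdist : ∀ i j, i ≠ j → p i ≠ p j) (i : Fin n) (t : ℕ) :
    ∃ e : ℕ, 1 ≤ e ∧ (∀ j, j ≠ i → p j ^ t ∣ e) ∧ p i ^ t ∣ e - 1 := by
  rcases Nat.eq_zero_or_pos t with rfl | ht
  · exact ⟨1, le_refl 1, fun j _ => by simp, by simp⟩
  · set M := ∏ j ∈ Finset.univ.erase i, p j ^ t with hM
    have hcop : Nat.Coprime M (p i ^ t) := by
      apply Nat.Coprime.prod_left
      intro j hj
      exact ((Nat.coprime_primes (hp j) (hp i)).mpr
        (hdist j i (Finset.ne_of_mem_erase hj))).pow t t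
    have h1 : 1 < p i ^ t := Nat.one_lt_pow (by omega) (hp i).one_lt
    obtain ⟨b, -, hb⟩ := Nat.exists_mul_mod_eq_one_of_coprime hcop h1
    have he1 : 1 ≤ M * b := by
      rcases Nat.eq_zero_or_pos (M * b) with h0 | h0
      · rw [h0] at hb; simp at hb
      · exact h0
    refine ⟨M * b, he1, fun j hj => ?_, ?_⟩
    · exact Dvd.dvd.mul_right
        (Finset.dvd_prod_of_mem _ (Finset.mem_erase.mpr ⟨hj, Finset.mem_univ j⟩)) b
    · have hdm := Nat.div_add_mod (M * b) (p i ^ t)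
      exact ⟨M * b / p i ^ t, by omega⟩

lemma exists_interior_nonempty {X ι : Type*} [TopologicalSpace X] (s : Finset ι)
    (F : ι → Set X) :
    ∀ U : Set X, (∀ i ∈ s, IsClosed (F i)) → IsOpen U → U.Nonempty →
      (U ⊆ ⋃ i ∈ s, F i) → ∃ i ∈ s, (interior (F i)).Nonempty := by
  classical
  induction s using Finset.induction_on with
  | empty =>
    intro U _ _ hne hcov
    obtain ⟨x, hx⟩ := hne
    simpa using hcov hx
  | @insert a s' ha ih =>
    intro U hF hU hne hcov
    by_cases hd : (U \ F a).Nonempty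
    · have hsub : U \ F a ⊆ ⋃ i ∈ s', F i := by
        intro x hx
        have hx2 := hcov hx.1
        rw [Finset.set_biUnion_insert] at hx2
        exact hx2.resolve_left hx.2
      obtain ⟨i, hi, hint⟩ := ih (U \ F a)
        (fun i hi => hF i (Finset.mem_insert_of_mem hi))
        (hU.sdiff (hF a (Finset.mem_insert_self a s'))) hd hsub
      exact ⟨i, Finset.mem_insert_of_mem hi, hint⟩
    · have hsub : U ⊆ F a := fun x hx => by
        by_contra hxa
        exact hd ⟨x, hx, hxa⟩
      exact ⟨a, Finset.mem_insert_self a s',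
        hne.mono (interior_maximal hsub hU)⟩

end Stmt12Aux

/-- Let `p₁, ..., pₙ` be pairwise distinct primes and, for each `i`, let
`Oᵢ` be the ring of integers of a finite extension of `ℚ_{pᵢ}` — modelled abstractly as a
compact Hausdorff topological ring which is a discrete valuation ring of characteristic
zero, with adic topology and finite residue field of characteristic `pᵢ`. If `H` is a
closed subgroup of `SL₂(O₁) × ... × SL₂(Oₙ)` whose projection to each factor `SL₂(Oᵢ)` is
open, then `H` is open. -/


theorem stmt12 (n : ℕ) (p : Fin n → ℕ) (hp : ∀ i, (p i).Prime)
    (hdist : ∀ i j, i ≠ j → p i ≠ p j)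
    (O : Fin n → Type) [∀ i, CommRing (O i)] [∀ i, IsDomain (O i)]
    [∀ i, TopologicalSpace (O i)] [∀ i, IsTopologicalRing (O i)]
    [∀ i, IsLocalRing (O i)] [∀ i, IsDiscreteValuationRing (O i)] [∀ i, CharZero (O i)]
    [∀ i, CompactSpace (O i)] [∀ i, T2Space (O i)]
    (hadic : ∀ i, IsAdic (maximalIdeal (O i)))
    [∀ i, Finite (ResidueField (O i))] (hchar : ∀ i, CharP (ResidueField (O i)) (p i))
    (H : Subgroup (∀ i, SpecialLinearGroup (Fin 2) (O i)))
    (hclosed : IsClosed (H : Set (∀ i, SpecialLinearGroup (Fin 2) (O i))))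
    (hproj : ∀ i, IsOpen ((Subgroup.map
      (Pi.evalMonoidHom (fun i => SpecialLinearGroup (Fin 2) (O i)) i) H :
        Subgroup (SpecialLinearGroup (Fin 2) (O i))) : Set (SpecialLinearGroup (Fin 2) (O i)))) :
    IsOpen (H : Set (∀ i, SpecialLinearGroup (Fin 2) (O i))) := by
  classical
  set G := ∀ i, SpecialLinearGroup (Fin 2) (O i) with hG
  -- the maximal ideals are open
  have hmopen : ∀ i, IsOpen ((maximalIdeal (O i) : Ideal (O i)) : Set (O i)) := by
    intro i
    have h1 := (isAdic_iff.mp (hadic i)).1 1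
    rwa [pow_one] at h1
  -- the primes lie in the maximal ideals
  have hpm : ∀ i, ((p i : O i)) ∈ maximalIdeal (O i) := by
    intro i
    have h0 : (residue (O i)) ((p i : ℕ) : O i) = 0 := by
      rw [map_natCast]
      exact CharP.cast_eq_zero (ResidueField (O i)) (p i)
    rwa [IsLocalRing.residue_eq_zero_iff] at h0
  -- congruence subgroups
  set K : ∀ i, Subgroup (SpecialLinearGroup (Fin 2) (O i)) :=
    fun i => Stmt12Aux.congSubgroup (maximalIdeal (O i)) with hK
  set P : Subgroup G := Subgroup.pi Set.univ K with hP
  have hPopen : IsOpen (P : Set G) := by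
    rw [hP, Subgroup.coe_pi]
    exact isOpen_set_pi Set.finite_univ fun i _ =>
      Stmt12Aux.congSubgroup_isOpen _ (hmopen i)
  -- the core limit argument
  have core : ∀ h : G, h ∈ H → h ∈ P → ∀ i, Pi.mulSingle i (h i) ∈ H := by
    intro h hH hPmem i
    choose e he1 hedvd hedvd1 using fun t => Stmt12Aux.exists_exp p hp hdist i t
    have htend : Filter.Tendsto (fun t => h ^ e t) Filter.atTop
        (nhds (Pi.mulSingle i (h i))) := by
      rw [tendsto_pi_nhds]
      intro j
      have hKj : Stmt12Aux.Ec (maximalIdeal (O j)) (h j) := hPmem j (Set.mem_univ j)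
      by_cases hji : j = i
      · subst hji
        simp only [Pi.mulSingle_eq_same, Pi.pow_apply]
        apply Stmt12Aux.tendsto_of_entries (hadic j)
        intro t a b
        obtain ⟨d, hd⟩ := hedvd1 t
        have hedt : e t = 1 + p j ^ t * d := by
          have := he1 t; omega
        have hq : Stmt12Aux.Ec (maximalIdeal (O j) ^ (1 + t)) ((h j) ^ (p j ^ t * d)) := by
          rw [pow_mul]
          exact (Stmt12Aux.Ec.pow_prime_iter (hpm j) hKj t).pow d
        have hsplit : (h j) ^ e t = h j * (h j) ^ (p j ^ t * d) := by
          rw [hedt, pow_add, pow_one]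
        rw [show (h ^ e t) j = (h j) ^ e t from rfl, hsplit]
        have hrw : ((↑(h j * (h j) ^ (p j ^ t * d)) : Matrix (Fin 2) (Fin 2) (O j))
            - (h j : Matrix (Fin 2) (Fin 2) (O j)))
            = (h j : Matrix (Fin 2) (Fin 2) (O j)) *
              ((↑((h j) ^ (p j ^ t * d)) : Matrix (Fin 2) (Fin 2) (O j)) - 1) := by
          rw [Matrix.SpecialLinearGroup.coe_mul, mul_sub, mul_one]
        rw [hrw]
        exact Stmt12Aux.entries_mul_left_mem hq _ a b
      · simp only [Pi.mulSingle_eq_of_ne hji, Pi.pow_apply]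
        apply Stmt12Aux.tendsto_of_entries (hadic j)
        intro t a b
        obtain ⟨d, hd⟩ := hedvd t j hji
        have hq : Stmt12Aux.Ec (maximalIdeal (O j) ^ (1 + t)) ((h j) ^ e t) := by
          rw [hd, pow_mul]
          exact (Stmt12Aux.Ec.pow_prime_iter (hpm j) hKj t).pow d
        rw [show (h ^ e t) j = (h j) ^ e t from rfl]
        simpa [Matrix.SpecialLinearGroup.coe_one] using hq a b
    exact hclosed.mem_of_tendsto htend
      (Filter.Eventually.of_forall fun t => H.pow_mem hH (e t))
  -- finite subcover by cosets of P
  obtain ⟨T, hT⟩ := IsCompact.elim_finite_subcover (isCompact_univ (X := G))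
    (fun g : G => (fun x => g * x) '' (P : Set G))
    (fun g => (Homeomorph.mulLeft g).isOpenMap _ hPopen)
    (fun x _ => Set.mem_iUnion.mpr ⟨x, ⟨1, P.one_mem, mul_one x⟩⟩)
  -- the slice subgroups
  set N : ∀ i, Subgroup (SpecialLinearGroup (Fin 2) (O i)) := fun i =>
    Subgroup.comap (MonoidHom.mulSingle (fun i => SpecialLinearGroup (Fin 2) (O i)) i) H
    with hN
  have hNclosed : ∀ i, IsClosed ((N i : Set (SpecialLinearGroup (Fin 2) (O i)))) := by
    intro i
    have hcont : Continuous
        (fun g : SpecialLinearGroup (Fin 2) (O i) => (Pi.mulSingle i g : G)) := by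
      apply continuous_pi
      intro j
      by_cases hji : j = i
      · subst hji
        simp only [Pi.mulSingle_eq_same]
        exact continuous_id
      · simp only [Pi.mulSingle_eq_of_ne hji]
        exact continuous_const
    exact hclosed.preimage hcont
  have hNopen : ∀ i, IsOpen ((N i : Set (SpecialLinearGroup (Fin 2) (O i)))) := by
    intro i
    set π := Pi.evalMonoidHom (fun i => SpecialLinearGroup (Fin 2) (O i)) i with hπ
    set w : G → G := fun g =>
      if hx : ∃ h', h' ∈ H ∧ h' ∈ (fun x => g * x) '' (P : Set G) then hx.choose else 1
      with hw
    have hcover : ((Subgroup.map π H : Subgroup _) : Set _)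
        ⊆ ⋃ g ∈ T, (fun x => (w g i) * x) '' (N i : Set _) := by
      rintro x ⟨h, hH, rfl⟩
      obtain ⟨g, hgT, hgmem⟩ := Set.mem_iUnion₂.mp (hT (Set.mem_univ h))
      have hne : ∃ h', h' ∈ H ∧ h' ∈ (fun x => g * x) '' (P : Set G) := ⟨h, hH, hgmem⟩
      have hwg : w g ∈ H ∧ w g ∈ (fun x => g * x) '' (P : Set G) := by
        rw [hw]
        simp only [dif_pos hne]
        exact hne.choose_spec
      obtain ⟨hwH, q, hqP, hq⟩ := hwg
      obtain ⟨q', hq'P, hq'⟩ := hgmem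
      have hP' : (w g)⁻¹ * h ∈ P := by
        have heq : (w g)⁻¹ * h = q⁻¹ * q' := by
          rw [← hq, ← hq']
          simp only [_root_.mul_inv_rev, mul_assoc]
          exact congrArg (q⁻¹ * ·) (inv_mul_cancel_left g q')
        rw [heq]
        exact P.mul_mem (P.inv_mem hqP) hq'P
      have hH' : (w g)⁻¹ * h ∈ H := H.mul_mem (H.inv_mem hwH) hH
      have hNi : ((w g)⁻¹ * h) i ∈ N i := core _ hH' hP' i
      refine Set.mem_iUnion₂.mpr ⟨g, hgT, (((w g)⁻¹ * h) i), hNi, ?_⟩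
      show (w g i) * (((w g)⁻¹ * h) i) = π h
      show (w g i) * (((w g)⁻¹ * h) i) = h i
      rw [Pi.mul_apply, Pi.inv_apply, ← mul_assoc, mul_inv_cancel, one_mul]
    have hAne : (Subgroup.map π H : Set (SpecialLinearGroup (Fin 2) (O i))).Nonempty :=
      ⟨1, by exact SetLike.mem_coe.mpr (Subgroup.one_mem _)⟩
    obtain ⟨g, hgT, hint⟩ := Stmt12Aux.exists_interior_nonempty T
      (fun g => (fun x => (w g i) * x) '' (N i : Set _)) _
      (fun g _ => (Homeomorph.mulLeft (w g i)).isClosedMap _ (hNclosed i))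
      (hproj i) hAne hcover
    have himg := (Homeomorph.mulLeft (w g i)).image_interior ((N i : Set _))
    rw [Homeomorph.coe_mulLeft] at himg
    rw [show (fun x => (w g i) * x) = ((w g i) * ·) from rfl, ← himg] at hint
    obtain ⟨x, y, hy, hxy⟩ := hint
    exact Subgroup.isOpen_of_mem_nhds (N i) (mem_interior_iff_mem_nhds.mp hy)
  -- conclude
  have hle : Subgroup.pi Set.univ N ≤ H := by
    intro x hx
    have hxprod := Finset.noncommProd_mulSingle x
    rw [← hxprod]
    exact Subgroup.noncommProd_mem H _ fun j _ =>
      (Subgroup.mem_pi Set.univ).mp hx j (Set.mem_univ j)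
  apply Subgroup.isOpen_mono hle
  rw [Subgroup.coe_pi]
  exact isOpen_set_pi Set.finite_univ fun j _ => hNopen j
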